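/- Let A ∈ B(E,F) have generalized inverse A⁺ and T ∈ B(E,F) with ‖T − A‖ < ‖A⁺‖⁻¹. Then the condition C_A(A⁺,T)⁻¹ T (N(A)) ⊆ R(A) is equivalent to R(C_A(A⁺,T)⁻¹ T) ⊆ R(A). -/

import Mathlib

open ContinuousLinearMap

variable {E F : Type*} [NormedAddCommGroup E] [NormedSpace ℝ E] [CompleteSpace E]
  [NormedAddCommGroup F] [NormedSpace ℝ F] [CompleteSpace F]

theorem stmt5 (A T : E →L[ℝ] F) (Ap : F →L[ℝ] E)
    (h1 : A ∘L (Ap ∘L A) = A) (h2 : Ap ∘L (A ∘L Ap) = Ap)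
    (hT : ‖T - A‖ < ‖Ap‖⁻¹) :
    Submodule.map ((Ring.inverse (ContinuousLinearMap.id ℝ F + (T - A) ∘L Ap) ∘L T : E →L[ℝ] F) : E →ₗ[ℝ] F)
        (LinearMap.ker (A : E →ₗ[ℝ] F)) ≤ LinearMap.range (A : E →ₗ[ℝ] F) ↔
      LinearMap.range ((Ring.inverse (ContinuousLinearMap.id ℝ F + (T - A) ∘L Ap) ∘L T : E →L[ℝ] F) : E →ₗ[ℝ] F) ≤
        LinearMap.range (A : E →ₗ[ℝ] F) := by
  set C : F →L[ℝ] F := ContinuousLinearMap.id ℝ F + (T - A) ∘L Ap with hC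
  -- small norm
  have hsmall : ‖-((T - A) ∘L Ap)‖ < 1 := by
    rw [norm_neg]
    rcases eq_or_ne Ap 0 with h0 | h0
    · exfalso
      rw [h0, norm_zero, inv_zero] at hT
      exact absurd hT (not_lt.2 (norm_nonneg _))
    · have hAp : (0:ℝ) < ‖Ap‖ := norm_pos_iff.2 h0
      calc ‖(T - A) ∘L Ap‖ ≤ ‖T - A‖ * ‖Ap‖ := opNorm_comp_le _ _
        _ < ‖Ap‖⁻¹ * ‖Ap‖ := by exact mul_lt_mul_of_pos_right hT hAp
        _ = 1 := inv_mul_cancel₀ (ne_of_gt hAp)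
  have hunit : IsUnit C := by
    refine ⟨Units.oneSub (-((T - A) ∘L Ap)) hsmall, ?_⟩
    ext x
    simp [hC]
    abel
  have hBC : Ring.inverse C ∘L C = ContinuousLinearMap.id ℝ F := by
    have := Ring.inverse_mul_cancel C hunit
    exact this
  have hkey : C ∘L A = T ∘L (Ap ∘L A) := by
    ext x
    have h1' : A (Ap (A x)) = A x := by
      have := congrArg (fun f : E →L[ℝ] F => f x) h1
      simpa using this
    simp [hC, h1']
  have hBTA : ∀ x, (Ring.inverse C ∘L T) (Ap (A x)) = A x := by
    intro x
    have : (Ring.inverse C ∘L (C ∘L A)) x = ((Ring.inverse C ∘L C) ∘L A) x := by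
      simp
    calc (Ring.inverse C ∘L T) (Ap (A x)) = Ring.inverse C ((T ∘L (Ap ∘L A)) x) := by simp
      _ = Ring.inverse C ((C ∘L A) x) := by rw [hkey]
      _ = ((Ring.inverse C ∘L C) ∘L A) x := by simp
      _ = A x := by rw [hBC]; simp
  constructor
  · intro h y hy
    obtain ⟨x, rfl⟩ := hy
    have hk : x - Ap (A x) ∈ LinearMap.ker (A : E →ₗ[ℝ] F) := by
      have h1' : A (Ap (A x)) = A x := by
        have := congrArg (fun f : E →L[ℝ] F => f x) h1
        simpa using this
      simp [LinearMap.mem_ker, map_sub, h1']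
    obtain ⟨z, hz⟩ := h (Submodule.mem_map_of_mem hk)
    refine ⟨z + x, ?_⟩
    have hsplit : (Ring.inverse C ∘L T) x
        = (Ring.inverse C ∘L T) (Ap (A x)) + (Ring.inverse C ∘L T) (x - Ap (A x)) := by
      rw [← map_add]
      congr 1
      abel
    rw [map_add, hz]; simp only [ContinuousLinearMap.coe_coe]; rw [hsplit, hBTA x]
    abel
  · intro h y hy
    obtain ⟨x, -, rfl⟩ := hy
    exact h ⟨x, rfl⟩
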